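/- A surjective ring homomorphism between commutative integral domains that are finitely generated algebras over a field of the same Krull dimension is injective, hence an isomorphism. -/

import Mathlib

open Polynomial

/-- In `D[X]` over a domain `D`, there is no chain of three primes all contracting to `⊥`. -/
lemma AuxKrull.no_three_domain {D : Type*} [CommRing D] [IsDomain D]
    {Q1 Q2 Q3 : Ideal D[X]} (h1 : Q1.IsPrime) (h2 : Q2.IsPrime) (h3 : Q3.IsPrime)
    (h12 : Q1 < Q2) (h23 : Q2 < Q3)
    (c1 : Q1.comap (C : D →+* D[X]) = ⊥) (c2 : Q2.comap (C : D →+* D[X]) = ⊥)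
    (c3 : Q3.comap (C : D →+* D[X]) = ⊥) : False := by
  classical
  set K := FractionRing D
  letI : Algebra D[X] K[X] := (mapRingHom (algebraMap D K)).toAlgebra
  have halg : (algebraMap D[X] K[X] : D[X] →+* K[X]) = mapRingHom (algebraMap D K) := rfl
  set M : Submonoid D[X] := (nonZeroDivisors D).map (C : D →+* D[X]).toMonoidHom with hM
  have hmemM : ∀ x : D[X], x ∈ M ↔ ∃ d ∈ nonZeroDivisors D, C d = x := by
    intro x; rw [hM]; exact Submonoid.mem_map
  haveI : IsLocalization M K[X] := by
    constructor
    constructor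
    · rintro ⟨y, hy⟩
      obtain ⟨d, hd, rfl⟩ := (hmemM _).mp hy
      have hd0 : (algebraMap D K) d ≠ 0 := by
        have : d ≠ 0 := nonZeroDivisors.ne_zero hd
        simpa using fun h => this (IsFractionRing.injective D K (by simpa using h))
      have : (algebraMap D[X] K[X]) (C d) = C ((algebraMap D K) d) := by
        rw [halg]; simp
      rw [this]
      exact (isUnit_C).mpr (isUnit_iff_ne_zero.mpr hd0)
    · intro z
      obtain ⟨b, hb⟩ := IsLocalization.integerNormalization_map_to_map (nonZeroDivisors D) z
      refine ⟨⟨IsLocalization.integerNormalization (nonZeroDivisors D) z,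
        ⟨C (b : D), (hmemM _).mpr ⟨b, b.2, rfl⟩⟩⟩, ?_⟩
      show z * (mapRingHom (algebraMap D K)) (C (b : D)) =
        (mapRingHom (algebraMap D K)) (IsLocalization.integerNormalization (nonZeroDivisors D) z)
      simp only [coe_mapRingHom, map_C]
      rw [hb]
      ext n
      simp [coeff_mul_C, coeff_smul, Algebra.smul_def, mul_comm]
    · intro a b h
      refine ⟨1, ?_⟩
      have : Function.Injective (algebraMap D[X] K[X]) := by
        rw [halg]
        exact Polynomial.map_injective _ (IsFractionRing.injective D K)
      simp [this h]
  have hdisj : ∀ (Q : Ideal D[X]), Q.comap (C : D →+* D[X]) = ⊥ →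
      Disjoint (M : Set D[X]) (Q : Set D[X]) := by
    intro Q hQ
    rw [Set.disjoint_left]
    rintro x hxM hxQ
    obtain ⟨d, hd, rfl⟩ := (hmemM _).mp hxM
    have : d ∈ Q.comap (C : D →+* D[X]) := hxQ
    rw [hQ] at this
    exact nonZeroDivisors.ne_zero hd this
  -- map the chain to K[X]
  have hmaplt : ∀ (P Q : Ideal D[X]), P.IsPrime → Q.IsPrime →
      P.comap (C : D →+* D[X]) = ⊥ → Q.comap (C : D →+* D[X]) = ⊥ → P < Q →
      P.map (algebraMap D[X] K[X]) < Q.map (algebraMap D[X] K[X]) := by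
    intro P Q hP hQ cP cQ hPQ
    refine lt_of_le_of_ne (Ideal.map_mono hPQ.le) ?_
    intro h
    apply hPQ.ne
    have e1 := IsLocalization.under_map_of_isPrime_disjoint M K[X] hP (hdisj P cP)
    have e2 := IsLocalization.under_map_of_isPrime_disjoint M K[X] hQ (hdisj Q cQ)
    rw [← e1, ← e2, h]
  have l12 := hmaplt Q1 Q2 h1 h2 c1 c2 h12
  have l23 := hmaplt Q2 Q3 h2 h3 c2 c3 h23
  haveI p2 : Ideal.IsPrime (Ideal.map (algebraMap D[X] K[X]) Q2) :=
    IsLocalization.isPrime_of_isPrime_disjoint M K[X] Q2 h2 (hdisj Q2 c2)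
  haveI p3 : Ideal.IsPrime (Ideal.map (algebraMap D[X] K[X]) Q3) :=
    IsLocalization.isPrime_of_isPrime_disjoint M K[X] Q3 h3 (hdisj Q3 c3)
  have hbne : Ideal.map (algebraMap D[X] K[X]) Q2 ≠ ⊥ := by
    intro h
    rw [h] at l12
    exact not_lt_bot l12
  have hmax := IsPrime.to_maximal_ideal hbne
  exact l23.ne (hmax.eq_of_le p3.ne_top l23.le)

/-- In `R[X]` over any commutative ring, no chain of three primes contracts to the same prime. -/
lemma AuxKrull.no_three {R : Type*} [CommRing R]
    {Q1 Q2 Q3 : Ideal R[X]} (h1 : Q1.IsPrime) (h2 : Q2.IsPrime) (h3 : Q3.IsPrime)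
    (h12 : Q1 < Q2) (h23 : Q2 < Q3)
    (he : Q1.comap (C : R →+* R[X]) = Q3.comap (C : R →+* R[X])) : False := by
  set p := Q1.comap (C : R →+* R[X]) with hp
  haveI : p.IsPrime := Ideal.comap_isPrime _ _
  have he2 : Q2.comap (C : R →+* R[X]) = p := by
    refine le_antisymm ?_ (Ideal.comap_mono h12.le)
    rw [he]
    exact Ideal.comap_mono h23.le
  have he3 : Q3.comap (C : R →+* R[X]) = p := he.symm
  set ψ : R[X] →+* (R ⧸ p)[X] := mapRingHom (Ideal.Quotient.mk p) with hψ
  have hsurj : Function.Surjective ψ := Polynomial.map_surjective _ Ideal.Quotient.mk_surjective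
  have hkerle : ∀ (Q : Ideal R[X]), Q.IsPrime → Q.comap (C : R →+* R[X]) = p →
      RingHom.ker ψ ≤ Q := by
    intro Q hQ hc g hg
    have hcoeff : ∀ n, g.coeff n ∈ p := by
      intro n
      have : (g.map (Ideal.Quotient.mk p)).coeff n = 0 := by
        rw [show g.map (Ideal.Quotient.mk p) = 0 from hg]; simp
      rw [coeff_map] at this
      exact Ideal.Quotient.eq_zero_iff_mem.mp this
    have : g ∈ p.map (C : R →+* R[X]) := Ideal.mem_map_C_iff.mpr hcoeff
    exact Ideal.map_le_iff_le_comap.mpr (le_of_eq hc.symm) this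
  have hcomap : ∀ (Q : Ideal R[X]), Q.IsPrime → Q.comap (C : R →+* R[X]) = p →
      Ideal.comap ψ (Q.map ψ) = Q := by
    intro Q hQ hc
    rw [Ideal.comap_map_of_surjective ψ hsurj]
    exact sup_eq_left.mpr (hkerle Q hQ hc)
  have hlt : ∀ (P Q : Ideal R[X]), P.IsPrime → Q.IsPrime →
      P.comap (C : R →+* R[X]) = p → Q.comap (C : R →+* R[X]) = p → P < Q →
      P.map ψ < Q.map ψ := by
    intro P Q hP hQ cP cQ hPQ
    refine lt_of_le_of_ne (Ideal.map_mono hPQ.le) ?_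
    intro h
    exact hPQ.ne (by rw [← hcomap P hP cP, ← hcomap Q hQ cQ, h])
  have hbot : ∀ (Q : Ideal R[X]), Q.IsPrime → Q.comap (C : R →+* R[X]) = p →
      (Q.map ψ).comap (C : (R ⧸ p) →+* (R ⧸ p)[X]) = ⊥ := by
    intro Q hQ hc
    rw [eq_bot_iff]
    intro d hd
    obtain ⟨r, rfl⟩ := Ideal.Quotient.mk_surjective d
    have h1 : (C : (R ⧸ p) →+* (R ⧸ p)[X]) (Ideal.Quotient.mk p r) = ψ ((C : R →+* R[X]) r) := by
      rw [hψ]; simp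
    have h2 : ψ ((C : R →+* R[X]) r) ∈ Q.map ψ := by
      rw [← h1]; exact hd
    have h3 : (C : R →+* R[X]) r ∈ Ideal.comap ψ (Q.map ψ) := h2
    rw [hcomap Q hQ hc] at h3
    have : r ∈ p := by rw [← hc]; exact h3
    simpa using Ideal.Quotient.eq_zero_iff_mem.mpr this
  exact AuxKrull.no_three_domain
    (Ideal.map_isPrime_of_surjective hsurj (hkerle Q1 h1 hp.symm))
    (Ideal.map_isPrime_of_surjective hsurj (hkerle Q2 h2 he2))
    (Ideal.map_isPrime_of_surjective hsurj (hkerle Q3 h3 he3))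
    (hlt Q1 Q2 h1 h2 hp.symm he2 h12) (hlt Q2 Q3 h2 h3 he2 he3 h23)
    (hbot Q1 h1 hp.symm) (hbot Q2 h2 he2) (hbot Q3 h3 he3)

/-- Transfer chain bounds along a surjective ring hom (comap on primes is strictly monotone). -/
lemma AuxKrull.chain_bound_of_surjective {S T : Type*} [CommRing S] [CommRing T]
    (f : S →+* T) (hf : Function.Surjective f) {N : ℕ}
    (h : ∀ l : LTSeries (PrimeSpectrum S), l.length ≤ N)
    (l : LTSeries (PrimeSpectrum T)) : l.length ≤ N := by
  have hmono : StrictMono (fun q : PrimeSpectrum T =>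
      (⟨Ideal.comap f q.asIdeal, Ideal.comap_isPrime f q.asIdeal⟩ : PrimeSpectrum S)) := by
    intro a b hab
    rw [← PrimeSpectrum.asIdeal_lt_asIdeal] at hab ⊢
    exact lt_of_le_of_ne (Ideal.comap_mono hab.le)
      (fun hc => hab.ne (Ideal.comap_injective_of_surjective f hf hc))
  simpa using h (l.map _ hmono)

/-- Seidenberg-type bound: chains in `Spec R[X]` are at most twice as long (plus one). -/
lemma AuxKrull.poly_chain_bound {R : Type*} [CommRing R] {n : ℕ}
    (h : ∀ l : LTSeries (PrimeSpectrum R), l.length ≤ n)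
    (l : LTSeries (PrimeSpectrum (Polynomial R))) : l.length ≤ 2 * n + 1 := by
  by_contra hc
  push_neg at hc
  have hlen : 2 * (n + 1) ≤ l.length := by omega
  let g : Fin (n + 2) → PrimeSpectrum R := fun i =>
    ⟨Ideal.comap (Polynomial.C : R →+* Polynomial R) (l ⟨2 * i, by omega⟩).asIdeal,
      Ideal.comap_isPrime _ _⟩
  have hg : StrictMono g := by
    intro i j hij
    have hij' : (i : ℕ) < (j : ℕ) := hij
    have s1 : l ⟨2 * i, by omega⟩ < l ⟨2 * i + 1, by omega⟩ := l.strictMono (Fin.mk_lt_mk.mpr (by omega))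
    have s2 : l ⟨2 * i + 1, by omega⟩ < l ⟨2 * i + 2, by omega⟩ := l.strictMono (Fin.mk_lt_mk.mpr (by omega))
    have s3 : l ⟨2 * i + 2, by omega⟩ ≤ l ⟨2 * j, by omega⟩ := l.monotone (Fin.mk_le_mk.mpr (by omega))
    rw [← PrimeSpectrum.asIdeal_lt_asIdeal]
    have hle1 : (g i).asIdeal ≤ Ideal.comap (Polynomial.C : R →+* Polynomial R)
        (l ⟨2 * i + 2, by omega⟩).asIdeal := by
      apply Ideal.comap_mono
      rw [PrimeSpectrum.asIdeal_le_asIdeal]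
      exact (s1.trans s2).le
    have hne : (g i).asIdeal ≠ Ideal.comap (Polynomial.C : R →+* Polynomial R)
        (l ⟨2 * i + 2, by omega⟩).asIdeal := by
      intro hcontra
      exact AuxKrull.no_three (l ⟨2 * i, by omega⟩).2 (l ⟨2 * i + 1, by omega⟩).2
        (l ⟨2 * i + 2, by omega⟩).2
        ((PrimeSpectrum.asIdeal_lt_asIdeal _ _).mpr s1)
        ((PrimeSpectrum.asIdeal_lt_asIdeal _ _).mpr s2) hcontra
    calc (g i).asIdeal
        < Ideal.comap (Polynomial.C : R →+* Polynomial R)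
          (l ⟨2 * i + 2, by omega⟩).asIdeal := lt_of_le_of_ne hle1 hne
      _ ≤ (g j).asIdeal := by
          apply Ideal.comap_mono
          rw [PrimeSpectrum.asIdeal_le_asIdeal]
          exact s3
  have := h (LTSeries.mk (n + 1) g hg)
  simp at this

/-- Chains in the spectrum of a multivariate polynomial ring over a field are bounded. -/
lemma AuxKrull.mv_chain_bound (k : Type*) [Field k] (n : ℕ) :
    ∃ N : ℕ, ∀ l : LTSeries (PrimeSpectrum (MvPolynomial (Fin n) k)), l.length ≤ N := by
  induction n with
  | zero =>
    refine ⟨0, fun l => ?_⟩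
    exact AuxKrull.chain_bound_of_surjective
      (MvPolynomial.isEmptyRingEquiv k (Fin 0)).symm.toRingHom
      (MvPolynomial.isEmptyRingEquiv k (Fin 0)).symm.surjective
      (fun l' => by
        have : Subsingleton (PrimeSpectrum k) := by
          constructor
          intro a b
          ext1
          have ha := a.2.ne_top
          have hb := b.2.ne_top
          rw [Ideal.eq_bot_of_prime a.asIdeal, Ideal.eq_bot_of_prime b.asIdeal]
        by_contra hl
        push_neg at hl
        have h01 : (⟨0, by omega⟩ : Fin (l'.length + 1)) < ⟨1, by omega⟩ :=
          Fin.mk_lt_mk.mpr (by omega)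
        exact (l'.strictMono h01).ne (Subsingleton.elim _ _)) l
  | succ n ih =>
    obtain ⟨N, hN⟩ := ih
    refine ⟨2 * N + 1, fun l => ?_⟩
    exact AuxKrull.chain_bound_of_surjective
      (MvPolynomial.finSuccEquiv k n).symm.toRingHom
      (MvPolynomial.finSuccEquiv k n).symm.toRingEquiv.surjective
      (AuxKrull.poly_chain_bound hN) l

/-- A surjective homomorphism between integral domains that are finitely generated
algebras over a field of the same Krull dimension is injective, hence an isomorphism. -/
theorem bijective_of_surjective_of_krullDim_eq (k A B : Type*) [Field k]
    [CommRing A] [CommRing B] [IsDomain A] [IsDomain B]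
    [Algebra k A] [Algebra k B] [Algebra.FiniteType k A] [Algebra.FiniteType k B]
    (hdim : ringKrullDim A = ringKrullDim B)
    (f : A →ₐ[k] B) (hf : Function.Surjective f) : Function.Bijective f := by
  refine ⟨?_, hf⟩
  by_contra hinj
  have hker : RingHom.ker (f : A →+* B) ≠ ⊥ := fun h =>
    hinj ((RingHom.injective_iff_ker_eq_bot (f : A →+* B)).mpr h)
  -- a uniform bound on chains in Spec B
  obtain ⟨n, g, hg⟩ := Algebra.FiniteType.iff_quotient_mvPolynomial''.mp
    (inferInstance : Algebra.FiniteType k B)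
  obtain ⟨N, hN⟩ := AuxKrull.mv_chain_bound k n
  have hB : ∀ l : LTSeries (PrimeSpectrum B), l.length ≤ N :=
    fun l => AuxKrull.chain_bound_of_surjective (g : MvPolynomial (Fin n) k →+* B) hg hN l
  -- Spec B is a finite dimensional order
  haveI : FiniteDimensionalOrder (PrimeSpectrum B) := by
    constructor
    have hne : (Set.range fun l : LTSeries (PrimeSpectrum B) => l.length).Nonempty :=
      ⟨(RelSeries.singleton _ (Classical.arbitrary _)).length, ⟨_, rfl⟩⟩
    have hbdd : ∀ m ∈ Set.range fun l : LTSeries (PrimeSpectrum B) => l.length, m ≤ N := by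
      rintro m ⟨l, rfl⟩; exact hB l
    obtain ⟨l₀, hl₀⟩ := Nat.sSup_mem hne ⟨N, hbdd⟩
    refine ⟨l₀, fun l => ?_⟩
    have hls : l.length ≤ sSup (Set.range fun l : LTSeries (PrimeSpectrum B) => l.length) :=
      le_csSup ⟨N, hbdd⟩ ⟨l, rfl⟩
    simpa [← hl₀] using hls
  set c := LTSeries.longestOf (PrimeSpectrum B) with hc
  have hdB : ringKrullDim B = c.length := Order.krullDim_eq_length_of_finiteDimensionalOrder
  -- map the longest chain into Spec A and prepend ⊥
  have hmono : StrictMono (fun q : PrimeSpectrum B =>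
      (⟨Ideal.comap (f : A →+* B) q.asIdeal,
        Ideal.comap_isPrime _ _⟩ : PrimeSpectrum A)) := by
    intro a b hab
    rw [← PrimeSpectrum.asIdeal_lt_asIdeal] at hab ⊢
    exact lt_of_le_of_ne (Ideal.comap_mono hab.le)
      (fun h0 => hab.ne (Ideal.comap_injective_of_surjective (f : A →+* B) hf h0))
  set c' := c.map _ hmono with hc'
  have hhead : (⟨⊥, Ideal.bot_prime⟩ : PrimeSpectrum A) < c'.head := by
    rw [← PrimeSpectrum.asIdeal_lt_asIdeal]
    refine lt_of_lt_of_le (Ne.bot_lt hker) ?_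
    rw [hc', LTSeries.head_map]
    rw [RingHom.ker_eq_comap_bot]
    exact Ideal.comap_mono bot_le
  have hle : ((c'.cons ⟨⊥, Ideal.bot_prime⟩ hhead).length : WithBot ℕ∞) ≤ ringKrullDim A :=
    Order.LTSeries.length_le_krullDim _
  rw [hdim, hdB] at hle
  simp only [RelSeries.cons_length] at hle
  have hlen' : c'.length = c.length := rfl
  rw [hlen'] at hle
  exact absurd hle (by exact_mod_cast by omega)
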